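/- Let $\theta_1, \theta_2 > 0$, $0 \le s_1 < \cdots < s_n \le 1$, $\Delta_i = s_i - s_{i-1}$, and $R_j = [e^{-\theta_j|s_m-s_l|}]_{m,l}$ for $j = 1,2$. Then $\mathrm{tr}(R_1 R_2^{-1}) = \sum_{i=2}^n \frac{(e^{-\theta_2\Delta_i} - e^{-\theta_1\Delta_i})^2}{1 - e^{-2\theta_2\Delta_i}} + \sum_{i=2}^n \frac{1 - e^{-2\theta_1\Delta_i}}{1 - e^{-2\theta_2\Delta_i}} + 1.$ -/

import Mathlib

open Matrix Real


private def Mtri (n : ℕ) (f e : Fin n → ℝ) (i : Fin n) :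
    Matrix (Fin (n + 1)) (Fin (n + 1)) ℝ :=
  Matrix.of fun k l =>
    (if l = i.castSucc then (if k = i.castSucc then f i else if k = i.succ then e i else 0) else 0) +
    (if l = i.succ then (if k = i.succ then f i else if k = i.castSucc then e i else 0) else 0)

private lemma mul_Mtri {n : ℕ} (f e : Fin n → ℝ) (A : Matrix (Fin (n+1)) (Fin (n+1)) ℝ)
    (i : Fin n) (m l : Fin (n+1)) :
    (A * Mtri n f e i) m l =
      (if l = i.castSucc then A m i.castSucc * f i + A m i.succ * e i else 0) +
      (if l = i.succ then A m i.succ * f i + A m i.castSucc * e i else 0) := by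
  have hne : i.castSucc ≠ i.succ := (Fin.castSucc_lt_succ : i.castSucc < i.succ).ne
  have hsp : ∀ (x y : ℝ) (a b : Fin (n+1)), a ≠ b → ∀ k : Fin (n+1),
      (if k = a then x else if k = b then y else 0) =
      (if k = a then x else 0) + (if k = b then y else 0) := by
    intro x y a b hab k
    split_ifs with h1 h2 <;> simp_all
  rw [Matrix.mul_apply]
  simp only [Mtri, Matrix.of_apply, mul_add]
  rw [Finset.sum_add_distrib]
  congr 1
  · by_cases h : l = i.castSucc
    · simp only [if_pos h, hsp _ _ _ _ hne, mul_add, mul_ite, mul_zero]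
      rw [Finset.sum_add_distrib, Finset.sum_ite_eq', Finset.sum_ite_eq']
      simp
    · simp [h]
  · by_cases h : l = i.succ
    · simp only [if_pos h, hsp _ _ _ _ hne.symm, mul_add, mul_ite, mul_zero]
      rw [Finset.sum_add_distrib, Finset.sum_ite_eq', Finset.sum_ite_eq']
      simp
    · simp [h]


private lemma sum_ite_castSucc {n : ℕ} (P : Fin n → ℝ) (l : Fin (n+1)) :
    (∑ i : Fin n, if l = i.castSucc then P i else 0) =
      if h : (l : ℕ) < n then P ⟨l, h⟩ else 0 := by
  split_ifs with h
  · rw [Finset.sum_eq_single ⟨l, h⟩]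
    · simp [Fin.ext_iff]
    · intro i _ hi
      rw [if_neg]
      intro hc
      exact hi (Fin.ext (by simpa [Fin.ext_iff] using hc.symm))
    · simp
  · apply Finset.sum_eq_zero
    intro i _
    rw [if_neg]
    intro hc
    apply h
    rw [Fin.ext_iff] at hc
    simp at hc
    omega
  
private lemma sum_ite_succ {n : ℕ} (P : Fin n → ℝ) (l : Fin (n+1)) :
    (∑ i : Fin n, if l = i.succ then P i else 0) =
      if h : (l : ℕ) ≠ 0 then P ⟨(l : ℕ) - 1, by have := l.isLt; omega⟩ else 0 := by
  split_ifs with h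
  · rw [Finset.sum_eq_single ⟨(l:ℕ) - 1, by have := l.isLt; omega⟩]
    · rw [if_pos]
      apply Fin.ext
      simp [Fin.ext_iff]
      omega
    · intro i _ hi
      rw [if_neg]
      intro hc
      rw [Fin.ext_iff] at hc
      simp at hc
      exact hi (Fin.ext (by simp; omega))
    · simp
  · apply Finset.sum_eq_zero
    intro i _
    rw [if_neg]
    intro hc
    rw [Fin.ext_iff] at hc
    simp at hc
    omega

private lemma sum_mul_Mtri {n : ℕ} (f e : Fin n → ℝ) (A : Matrix (Fin (n+1)) (Fin (n+1)) ℝ)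
    (m l : Fin (n+1)) :
    ∑ i : Fin n, (A * Mtri n f e i) m l =
      (if h : (l : ℕ) < n then
        A m l * f ⟨l, h⟩ + A m (Fin.succ ⟨l, h⟩) * e ⟨l, h⟩ else 0) +
      (if h : (l : ℕ) ≠ 0 then
        A m l * f ⟨(l : ℕ) - 1, by have := l.isLt; omega⟩ +
          A m (Fin.castSucc ⟨(l : ℕ) - 1, by have := l.isLt; omega⟩) *
            e ⟨(l : ℕ) - 1, by have := l.isLt; omega⟩ else 0) := by
  have h1 : ∀ i : Fin n, (A * Mtri n f e i) m l =
      (if l = i.castSucc then A m i.castSucc * f i + A m i.succ * e i else 0) +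
      (if l = i.succ then A m i.succ * f i + A m i.castSucc * e i else 0) :=
    fun i => mul_Mtri f e A i m l
  rw [Finset.sum_congr rfl (fun i _ => h1 i), Finset.sum_add_distrib,
    sum_ite_castSucc (fun i => A m i.castSucc * f i + A m i.succ * e i) l,
    sum_ite_succ (fun i => A m i.succ * f i + A m i.castSucc * e i) l]
  have hc : ∀ (h : (l:ℕ) < n), Fin.castSucc ⟨(l:ℕ), h⟩ = l := fun h => by
    apply Fin.ext; simp
  have hsu : ∀ (hp : (l:ℕ)-1 < n), (l:ℕ) ≠ 0 → Fin.succ ⟨(l:ℕ)-1, hp⟩ = l := fun hp h0 => by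
    apply Fin.ext; simp; omega
  split_ifs with hn h0 h0 <;> simp [hc, hsu, *]

theorem stmt2 (n : ℕ) (θ₁ θ₂ : ℝ) (h1 : 0 < θ₁) (h2 : 0 < θ₂)
    (s : Fin (n + 1) → ℝ) (hs : StrictMono s) (h0 : 0 ≤ s 0) (hl : s (Fin.last n) ≤ 1) :
    Matrix.trace
        ((Matrix.of fun m l : Fin (n + 1) => Real.exp (-θ₁ * |s m - s l|)) *
          (Matrix.of fun m l : Fin (n + 1) => Real.exp (-θ₂ * |s m - s l|))⁻¹) =
      (∑ i : Fin n,
        (Real.exp (-θ₂ * (s i.succ - s i.castSucc)) -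
            Real.exp (-θ₁ * (s i.succ - s i.castSucc))) ^ 2 /
          (1 - Real.exp (-2 * θ₂ * (s i.succ - s i.castSucc)))) +
      (∑ i : Fin n,
        (1 - Real.exp (-2 * θ₁ * (s i.succ - s i.castSucc))) /
          (1 - Real.exp (-2 * θ₂ * (s i.succ - s i.castSucc)))) + 1 := by
  classical
  set ρ : Fin n → ℝ := fun i => Real.exp (-θ₂ * (s i.succ - s i.castSucc)) with hρ
  set r : Fin n → ℝ := fun i => Real.exp (-θ₁ * (s i.succ - s i.castSucc)) with hr
  set f : Fin n → ℝ := fun i => ρ i ^ 2 / (1 - ρ i ^ 2) with hf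
  set e : Fin n → ℝ := fun i => -ρ i / (1 - ρ i ^ 2) with he
  have hΔ : ∀ i : Fin n, s i.castSucc < s i.succ := fun i => hs (Fin.castSucc_lt_succ : i.castSucc < i.succ)
  have hρpos : ∀ i, 0 < ρ i := fun i => Real.exp_pos _
  have hρlt : ∀ i, ρ i < 1 := by
    intro i
    rw [hρ]
    rw [Real.exp_lt_one_iff]
    nlinarith [hΔ i]
  have hne : ∀ i, 1 - ρ i ^ 2 ≠ 0 := by
    intro i
    have := hρpos i; have := hρlt i
    nlinarith
  have key1 : ∀ (θ : ℝ) (j : Fin n) (m : Fin (n+1)), (m : ℕ) ≤ (j : ℕ) →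
      Real.exp (-θ * |s m - s j.succ|) =
        Real.exp (-θ * |s m - s j.castSucc|) * Real.exp (-θ * (s j.succ - s j.castSucc)) := by
    intro θ j m hm
    have hle : s m ≤ s j.castSucc := hs.monotone (by rw [Fin.le_def]; simpa using hm)
    have hle2 : s j.castSucc ≤ s j.succ := (hΔ j).le
    rw [abs_of_nonpos (by linarith), abs_of_nonpos (by linarith), ← Real.exp_add]
    congr 1; ring
  have key2 : ∀ (θ : ℝ) (j : Fin n) (m : Fin (n+1)), (j : ℕ) < (m : ℕ) →
      Real.exp (-θ * |s m - s j.castSucc|) =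
        Real.exp (-θ * |s m - s j.succ|) * Real.exp (-θ * (s j.succ - s j.castSucc)) := by
    intro θ j m hm
    have hle : s j.succ ≤ s m := hs.monotone (by rw [Fin.le_def]; simpa using hm)
    have hle2 : s j.castSucc ≤ s j.succ := (hΔ j).le
    rw [abs_of_nonneg (by linarith), abs_of_nonneg (by linarith), ← Real.exp_add]
    congr 1; ring
  set A₂ : Matrix (Fin (n+1)) (Fin (n+1)) ℝ :=
    Matrix.of fun m l : Fin (n + 1) => Real.exp (-θ₂ * |s m - s l|) with hA₂
  set A₁ : Matrix (Fin (n+1)) (Fin (n+1)) ℝ :=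
    Matrix.of fun m l : Fin (n + 1) => Real.exp (-θ₁ * |s m - s l|) with hA₁
  set B : Matrix (Fin (n+1)) (Fin (n+1)) ℝ := 1 + ∑ i : Fin n, Mtri n f e i with hB
  have hA₂app : ∀ m l, A₂ m l = Real.exp (-θ₂ * |s m - s l|) := fun m l => rfl
  have hinv : A₂ * B = 1 := by
    rw [hB, mul_add, mul_one, Finset.mul_sum]
    ext m l
    rw [Matrix.add_apply, Matrix.sum_apply, sum_mul_Mtri]
    rcases lt_trichotomy (m : ℕ) (l : ℕ) with hml | hml | hml
    · have hl0 : (l : ℕ) ≠ 0 := by omega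
      have hmne : m ≠ l := fun h => by simp [h] at hml
      rw [Matrix.one_apply_ne hmne]
      rw [dif_pos hl0]
      have hl1 : (l : ℕ) - 1 < n := by have := l.isLt; omega
      have hj' : (Fin.succ (⟨(l : ℕ) - 1, hl1⟩ : Fin n)) = l := Fin.ext (by simp; omega)
      have e2 : A₂ m l = A₂ m (Fin.castSucc ⟨(l : ℕ) - 1, hl1⟩) * ρ ⟨(l : ℕ) - 1, hl1⟩ := by
        have h := key1 θ₂ ⟨(l : ℕ) - 1, hl1⟩ m (by simp; omega)
        simp only [hA₂app, hρ]
        conv_lhs => rw [← hj']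
        exact h
      by_cases hn : (l : ℕ) < n
      · rw [dif_pos hn]
        have e1 : A₂ m (Fin.succ ⟨(l : ℕ), hn⟩) = A₂ m l * ρ ⟨(l : ℕ), hn⟩ := by
          have hcs : (Fin.castSucc ⟨(l : ℕ), hn⟩) = l := Fin.ext (by simp)
          have := key1 θ₂ ⟨(l : ℕ), hn⟩ m (by simp; omega)
          rw [hcs] at this
          exact this
        rw [e1, e2]
        simp only [hf, he]
        field_simp [hne ⟨(l : ℕ) - 1, hl1⟩, hne ⟨(l : ℕ), hn⟩]
        ring
      · rw [dif_neg hn]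
        rw [e2]
        simp only [hf, he]
        field_simp [hne ⟨(l : ℕ) - 1, hl1⟩]
        ring
    · -- m = l
      have hm : m = l := Fin.ext hml
      subst hm
      rw [Matrix.one_apply_eq]
      have hAmm : A₂ m m = 1 := by simp [hA₂app]
      by_cases hn : (m : ℕ) < n
      · rw [dif_pos hn]
        have hcs : Fin.castSucc (⟨(m : ℕ), hn⟩ : Fin n) = m := Fin.ext (by simp)
        have e1 : A₂ m (Fin.succ ⟨(m : ℕ), hn⟩) =
            A₂ m (Fin.castSucc ⟨(m : ℕ), hn⟩) * ρ ⟨(m : ℕ), hn⟩ :=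
          key1 θ₂ ⟨(m : ℕ), hn⟩ m (by simp)
        have hcs' : A₂ m (Fin.castSucc ⟨(m : ℕ), hn⟩) = 1 := by rw [hcs, hAmm]
        rw [e1, hcs', hAmm]
        by_cases h0 : (m : ℕ) ≠ 0
        · rw [dif_pos h0]
          have hl1 : (m : ℕ) - 1 < n := by have := m.isLt; omega
          have hj' : (Fin.succ (⟨(m : ℕ) - 1, hl1⟩ : Fin n)) = m := Fin.ext (by simp; omega)
          have e2 : A₂ m (Fin.castSucc ⟨(m : ℕ) - 1, hl1⟩) =
              A₂ m (Fin.succ ⟨(m : ℕ) - 1, hl1⟩) * ρ ⟨(m : ℕ) - 1, hl1⟩ :=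
            key2 θ₂ ⟨(m : ℕ) - 1, hl1⟩ m (by show (m : ℕ) - 1 < (m : ℕ); omega)
          have hj'' : A₂ m (Fin.succ ⟨(m : ℕ) - 1, hl1⟩) = 1 := by rw [hj', hAmm]
          rw [e2, hj'']
          simp only [hf, he]
          field_simp [hne ⟨(m : ℕ) - 1, hl1⟩, hne ⟨(m : ℕ), hn⟩]
          ring
        · rw [dif_neg h0]
          simp only [hf, he]
          field_simp [hne ⟨(m : ℕ), hn⟩]
          ring
      · rw [dif_neg hn]
        by_cases h0 : (m : ℕ) ≠ 0
        · rw [dif_pos h0]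
          have hl1 : (m : ℕ) - 1 < n := by have := m.isLt; omega
          have hj' : (Fin.succ (⟨(m : ℕ) - 1, hl1⟩ : Fin n)) = m := Fin.ext (by simp; omega)
          have e2 : A₂ m (Fin.castSucc ⟨(m : ℕ) - 1, hl1⟩) =
              A₂ m (Fin.succ ⟨(m : ℕ) - 1, hl1⟩) * ρ ⟨(m : ℕ) - 1, hl1⟩ :=
            key2 θ₂ ⟨(m : ℕ) - 1, hl1⟩ m (by show (m : ℕ) - 1 < (m : ℕ); omega)
          have hj'' : A₂ m (Fin.succ ⟨(m : ℕ) - 1, hl1⟩) = 1 := by rw [hj', hAmm]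
          rw [e2, hj'', hAmm]
          simp only [hf, he]
          field_simp [hne ⟨(m : ℕ) - 1, hl1⟩]
          ring
        · rw [dif_neg h0]
          rw [hAmm]
          norm_num
    · -- l < m
      have hmne : m ≠ l := fun h => by simp [h] at hml
      rw [Matrix.one_apply_ne hmne]
      have hn : (l : ℕ) < n := by have := m.isLt; omega
      rw [dif_pos hn]
      have hcs : Fin.castSucc (⟨(l : ℕ), hn⟩ : Fin n) = l := Fin.ext (by simp)
      have e1 : A₂ m l = A₂ m (Fin.succ ⟨(l : ℕ), hn⟩) * ρ ⟨(l : ℕ), hn⟩ := by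
        have h := key2 θ₂ ⟨(l : ℕ), hn⟩ m (by simp; omega)
        rw [hcs] at h
        exact h
      by_cases h0 : (l : ℕ) ≠ 0
      · rw [dif_pos h0]
        have hl1 : (l : ℕ) - 1 < n := by have := l.isLt; omega
        have hj' : (Fin.succ (⟨(l : ℕ) - 1, hl1⟩ : Fin n)) = l := Fin.ext (by simp; omega)
        have e2 : A₂ m (Fin.castSucc ⟨(l : ℕ) - 1, hl1⟩) =
            A₂ m (Fin.succ ⟨(l : ℕ) - 1, hl1⟩) * ρ ⟨(l : ℕ) - 1, hl1⟩ :=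
          key2 θ₂ ⟨(l : ℕ) - 1, hl1⟩ m (by simp; omega)
        have hj'' : A₂ m (Fin.succ ⟨(l : ℕ) - 1, hl1⟩) = A₂ m l := by rw [hj']
        rw [e2, hj'', e1]
        simp only [hf, he]
        field_simp [hne ⟨(l : ℕ) - 1, hl1⟩, hne ⟨(l : ℕ), hn⟩]
        ring
      · rw [dif_neg h0]
        rw [e1]
        simp only [hf, he]
        field_simp [hne ⟨(l : ℕ), hn⟩]
        ring
  have hBinv : A₂⁻¹ = B := Matrix.inv_eq_right_inv hinv
  rw [hBinv, hB, mul_add, mul_one, Finset.mul_sum, Matrix.trace_add, Matrix.trace_sum]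
  have htr1 : Matrix.trace A₁ = (n : ℝ) + 1 := by
    have hd : ∀ m : Fin (n+1), A₁ m m = 1 := fun m => by simp [hA₁]
    rw [Matrix.trace]
    simp only [Matrix.diag]
    rw [Finset.sum_congr rfl (fun m _ => hd m)]
    simp
  have hr1 : ∀ i : Fin n, A₁ i.castSucc i.succ = r i := by
    intro i
    simp only [hA₁, Matrix.of_apply, hr]
    rw [abs_of_nonpos (by have := hΔ i; linarith)]
    congr 1; ring
  have hr2 : ∀ i : Fin n, A₁ i.succ i.castSucc = r i := by
    intro i
    simp only [hA₁, Matrix.of_apply, hr]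
    rw [abs_of_nonneg (by have := hΔ i; linarith)]
  have htr2 : ∀ i : Fin n, Matrix.trace (A₁ * Mtri n f e i) =
      f i + r i * e i + (f i + r i * e i) := by
    intro i
    rw [Matrix.trace]
    simp only [Matrix.diag]
    rw [Finset.sum_congr rfl (fun l _ => mul_Mtri f e A₁ i l l), Finset.sum_add_distrib,
      Finset.sum_ite_eq' Finset.univ i.castSucc
        (fun l => A₁ l i.castSucc * f i + A₁ l i.succ * e i),
      Finset.sum_ite_eq' Finset.univ i.succ
        (fun l => A₁ l i.succ * f i + A₁ l i.castSucc * e i)]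
    simp only [Finset.mem_univ, if_true, hr1, hr2]
    have d1 : A₁ i.castSucc i.castSucc = 1 := by simp [hA₁]
    have d2 : A₁ i.succ i.succ = 1 := by simp [hA₁]
    rw [d1, d2]
    ring
  rw [htr1, Finset.sum_congr rfl (fun i _ => htr2 i)]
  have hsq2 : ∀ i : Fin n, Real.exp (-2 * θ₂ * (s i.succ - s i.castSucc)) = ρ i ^ 2 := by
    intro i
    simp only [hρ]
    rw [sq, ← Real.exp_add]
    congr 1; ring
  have hsq1 : ∀ i : Fin n, Real.exp (-2 * θ₁ * (s i.succ - s i.castSucc)) = r i ^ 2 := by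
    intro i
    simp only [hr]
    rw [sq, ← Real.exp_add]
    congr 1; ring
  simp only [hsq1, hsq2]
  rw [← Finset.sum_add_distrib]
  have hper : ∀ i : Fin n,
      (ρ i - r i) ^ 2 / (1 - ρ i ^ 2) + (1 - r i ^ 2) / (1 - ρ i ^ 2) =
        1 + (f i + r i * e i + (f i + r i * e i)) := by
    intro i
    simp only [hf, he]
    field_simp [hne i]
    ring
  rw [Finset.sum_congr rfl (fun i _ => hper i)]
  simp [Finset.sum_add_distrib]
  ring
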